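/- The average purity of a subsystem A of N_A qubits for the random graph state CZ ensemble equals (d_A + d_B - 1)/d, where d_A = 2^{N_A}, d_B = 2^{N - N_A}, d = 2^N. In the combinatorial formulation: the number of strings in (F_2^2)^N that survive all pairwise parity constraints between A and its complement, times d^{-2}, equals (d_A + d_B - 1)/d. -/

import Mathlib

section Aux

variable {N : ℕ} (A : Finset (Fin N))

/-- Functions vanishing outside `A` are equivalent to functions on `A`. -/
def suppEquiv : {b : Fin N → ZMod 2 // ∀ j ∉ A, b j = 0} ≃ (A → ZMod 2) where
  toFun b a := b.1 a
  invFun f := ⟨fun i => if h : i ∈ A then f ⟨i, h⟩ else 0, fun j hj => dif_neg hj⟩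
  left_inv b := by
    ext i
    by_cases h : i ∈ A
    · simp [h]
    · simp [h, b.2 i h]
  right_inv f := by ext a; simp

lemma card_supp : (Finset.univ.filter
    (fun b : Fin N → ZMod 2 => ∀ j ∉ A, b j = 0)).card = 2 ^ A.card := by
  rw [← Fintype.card_subtype]
  rw [Fintype.card_congr (suppEquiv A)]
  simp [Fintype.card_fun]

lemma zmod2_cases (x : ZMod 2) : x = 0 ∨ x = 1 := by
  fin_cases x
  · exact Or.inl rfl
  · exact Or.inr rfl

end Aux

theorem stmt_5 (N NA : ℕ) (A : Finset (Fin N)) (hA : A.card = NA) :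
    ((Nat.card {b : Fin N → ZMod 2 //
        ∀ i ∈ A, ∀ j ∉ A, ¬(b i = 1 ∧ b j = 1)} * 2 ^ N : ℕ) : ℚ) / ((2 : ℚ) ^ N) ^ 2
      = ((2 : ℚ) ^ NA + 2 ^ (N - NA) - 1) / 2 ^ N := by
  classical
  have hequiv : ∀ b : Fin N → ZMod 2,
      (∀ i ∈ A, ∀ j ∉ A, ¬(b i = 1 ∧ b j = 1)) ↔
      ((∀ j ∉ A, b j = 0) ∨ (∀ i ∈ A, b i = 0)) := by
    intro b
    constructor
    · intro h
      by_cases hB : ∀ j ∉ A, b j = 0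
      · exact Or.inl hB
      · right
        push_neg at hB
        obtain ⟨j, hj, hbj⟩ := hB
        have hbj1 : b j = 1 := (zmod2_cases (b j)).resolve_left hbj
        intro i hi
        rcases zmod2_cases (b i) with h0 | h1
        · exact h0
        · exact absurd ⟨h1, hbj1⟩ (h i hi j hj)
    · rintro (h | h) i hi j hj ⟨hi1, hj1⟩
      · rw [h j hj] at hj1; exact zero_ne_one hj1
      · rw [h i hi] at hi1; exact zero_ne_one hi1
  have hcard : Nat.card {b : Fin N → ZMod 2 //
      ∀ i ∈ A, ∀ j ∉ A, ¬(b i = 1 ∧ b j = 1)} = 2 ^ NA + 2 ^ (N - NA) - 1 := by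
    rw [Nat.card_eq_fintype_card, Fintype.card_subtype]
    have hset : (Finset.univ.filter
        (fun b : Fin N → ZMod 2 => ∀ i ∈ A, ∀ j ∉ A, ¬(b i = 1 ∧ b j = 1)))
        = (Finset.univ.filter (fun b : Fin N → ZMod 2 => ∀ j ∉ A, b j = 0)) ∪
          (Finset.univ.filter (fun b : Fin N → ZMod 2 => ∀ i ∈ A, b i = 0)) := by
      rw [← Finset.filter_or]
      exact Finset.filter_congr (fun b _ => hequiv b)
    rw [hset]
    have hinter : ((Finset.univ.filter (fun b : Fin N → ZMod 2 => ∀ j ∉ A, b j = 0)) ∩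
          (Finset.univ.filter (fun b : Fin N → ZMod 2 => ∀ i ∈ A, b i = 0)))
        = {(fun _ => 0 : Fin N → ZMod 2)} := by
      ext b
      simp only [Finset.mem_inter, Finset.mem_filter, Finset.mem_univ, true_and,
        Finset.mem_singleton]
      constructor
      · rintro ⟨h1, h2⟩
        funext i
        by_cases h : i ∈ A
        · exact h2 i h
        · exact h1 i h
      · rintro rfl
        exact ⟨fun _ _ => rfl, fun _ _ => rfl⟩
    have hc1 : (Finset.univ.filter
        (fun b : Fin N → ZMod 2 => ∀ j ∉ A, b j = 0)).card = 2 ^ NA := by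
      rw [card_supp, hA]
    have hc2 : (Finset.univ.filter
        (fun b : Fin N → ZMod 2 => ∀ i ∈ A, b i = 0)).card = 2 ^ (N - NA) := by
      have := card_supp Aᶜ
      simp only [Finset.mem_compl, not_not] at this
      rw [this, Finset.card_compl, hA, Fintype.card_fin]
    have := Finset.card_union_add_card_inter
      (Finset.univ.filter (fun b : Fin N → ZMod 2 => ∀ j ∉ A, b j = 0))
      (Finset.univ.filter (fun b : Fin N → ZMod 2 => ∀ i ∈ A, b i = 0))
    rw [hinter, hc1, hc2, Finset.card_singleton] at this
    exact Nat.eq_sub_of_add_eq this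
  rw [hcard]
  have h1 : (1 : ℕ) ≤ 2 ^ NA + 2 ^ (N - NA) :=
    Nat.one_le_two_pow.trans (Nat.le_add_right _ _)
  push_cast [h1]
  have h2 : ((2 : ℚ) ^ N) ≠ 0 := by positivity
  field_simp
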